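/- Let D be a connected rooted digraph and let x be a vertex of D of indegree at least k such that for every in-neighbour y of x, the set N⁻(x)−y does not cut y from r (i.e. there is a directed path from r to y in D−(N⁻(x)−y)). Then D has an outbranching with at least k leaves. -/

import Mathlib

variable {V : Type*}

/-- Reachability by directed paths in a digraph given by its arc relation. -/
def Reaches (A : V → V → Prop) : V → V → Prop :=
  Relation.ReflTransGen A

/-- Reachability by directed paths avoiding the vertex set `S` (i.e. in `D − S`). -/
def ReachesAvoiding (A : V → V → Prop) (S : Set V) : V → V → Prop :=
  Relation.ReflTransGen (fun u v => A u v ∧ u ∉ S ∧ v ∉ S)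

/-- A rooted digraph: loopless, the distinguished root `r` has indegree 0 and at
least two outneighbours, and there is no arc `(x, y)` with `x ≠ r` and `y` an
outneighbour of `r`. -/
def IsRootedDigraph (A : V → V → Prop) (r : V) : Prop :=
  (∀ v, ¬ A v v) ∧
  (∀ v, ¬ A v r) ∧
  (∃ u v, u ≠ v ∧ A r u ∧ A r v) ∧
  ∀ x y, x ≠ r → A r y → ¬ A x y

/-- A rooted digraph is connected if every vertex is reachable from the root. -/
def RConnected (A : V → V → Prop) (r : V) : Prop :=
  ∀ v, Reaches A r v

/-- `S` is a cut of the rooted digraph: `S ⊆ V − r` and some vertex outside `S`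
is the endpoint of no directed path from `r` in `D − S`. -/
def IsCut (A : V → V → Prop) (r : V) (S : Set V) : Prop :=
  r ∉ S ∧ ∃ z ∉ S, ¬ ReachesAvoiding A S r z

/-- A rooted digraph is 2-connected if it has no cut of size at most 1. -/
def TwoConnected (A : V → V → Prop) (r : V) : Prop :=
  ∀ S : Set V, S.ncard ≤ 1 → ¬ IsCut A r S

/-- `T` is an outbranching of the rooted digraph `(A, r)`: a spanning directed
tree rooted at `r` (every vertex other than `r` has a unique in-arc in `T`, the
root has none, and every vertex is reachable from `r` in `T`). -/
def IsOutbranching (A : V → V → Prop) (r : V) (T : V → V → Prop) : Prop :=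
  (∀ u v, T u v → A u v) ∧
  (∀ v, v ≠ r → ∃! u, T u v) ∧
  (∀ u, ¬ T u r) ∧
  ∀ v, Reaches T r v

/-- The number of leaves (vertices of outdegree 0) of an outbranching `T`. -/
noncomputable def leafCount (T : V → V → Prop) : ℕ :=
  {v | ∀ u, ¬ T v u}.ncard

/-- The maximum number of leaves over all outbranchings. -/
noncomputable def maxleaf (A : V → V → Prop) (r : V) : ℕ :=
  sSup {n | ∃ T : V → V → Prop, IsOutbranching A r T ∧ n = leafCount T}

/-- Indegree of a vertex. -/
noncomputable def indeg (A : V → V → Prop) (v : V) : ℕ := {u | A u v}.ncard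

/-- Outdegree of a vertex. -/
noncomputable def outdeg (A : V → V → Prop) (v : V) : ℕ := {u | A v u}.ncard

/-- A vertex is nice if it has a simple in-arc, i.e. an in-arc not belonging to
a 2-circuit. -/
def Nice (A : V → V → Prop) (v : V) : Prop := ∃ u, A u v ∧ ¬ A v u

/-- A vertex is special if it has indegree at least 3 or a simple in-arc. -/
def Special (A : V → V → Prop) (v : V) : Prop := 3 ≤ indeg A v ∨ Nice A v

/-- A non-special vertex: distinct from `r`, with exactly two in-neighbours,
both of which are also its outneighbours. -/
def NonSpecial (A : V → V → Prop) (r : V) (v : V) : Prop :=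
  v ≠ r ∧ ∃ a b, a ≠ b ∧ {u | A u v} = {a, b} ∧ A v a ∧ A v b

/-- `x 0, …, x 4` is a bipath of length 4: the arcs of `D` incident to the
internal vertices `x 1, x 2, x 3` are exactly the arcs `(x i, x (i+1))` and
`(x (i+1), x i)` of the bipath. -/
def IsBipath4 (A : V → V → Prop) (x : Fin 5 → V) : Prop :=
  Function.Injective x ∧
  ∀ i : Fin 5, 0 < (i : ℕ) → (i : ℕ) < 4 →
    (∀ v, A (x i) v ↔ v = x (i - 1) ∨ v = x (i + 1)) ∧
    (∀ v, A v (x i) ↔ v = x (i - 1) ∨ v = x (i + 1))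

/-- A digraph is acyclic if it has no directed cycle. -/
def Acyclic (A : V → V → Prop) : Prop :=
  ∀ u v, A u v → ¬ Reaches A v u

/-- A partial outbranching of `(R, r)` with vertex set `F`. -/
def POB (R : V → V → Prop) (r : V) (F : Set V) (T : V → V → Prop) : Prop :=
  r ∈ F ∧
  (∀ u v, T u v → R u v ∧ u ∈ F ∧ v ∈ F) ∧
  (∀ v ∈ F, v ≠ r → ∃! u, T u v) ∧
  (∀ u, ¬ T u r) ∧
  (∀ v ∈ F, Relation.ReflTransGen T r v)

theorem POB_base {R : V → V → Prop} {r : V} :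
    POB R r {r} (fun _ _ => False) := by
  refine ⟨rfl, fun u v h => h.elim, ?_, fun u h => h, ?_⟩
  · intro v hv hvr; exact absurd hv hvr
  · intro v hv; rw [Set.mem_singleton_iff] at hv; subst hv; exact .refl

theorem POB.mono {R R' : V → V → Prop} {r : V} {F : Set V} {T : V → V → Prop}
    (hRR : ∀ a b, R a b → R' a b) (h : POB R r F T) : POB R' r F T :=
  ⟨h.1, fun u v huv => ⟨hRR u v (h.2.1 u v huv).1, (h.2.1 u v huv).2⟩, h.2.2⟩

theorem POB.addArc {R : V → V → Prop} {r : V} {F : Set V} {T : V → V → Prop}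
    (h : POB R r F T) {u w : V} (hR : R u w) (hu : u ∈ F) (hw : w ∉ F) :
    POB R r (insert w F) (fun a b => T a b ∨ (a = u ∧ b = w)) := by
  obtain ⟨hr, hsup, huniq, hnr, hreach⟩ := h
  refine ⟨Set.mem_insert_of_mem _ hr, ?_, ?_, ?_, ?_⟩
  · rintro a b (hab | ⟨rfl, rfl⟩)
    · exact ⟨(hsup a b hab).1, Set.mem_insert_of_mem _ (hsup a b hab).2.1,
        Set.mem_insert_of_mem _ (hsup a b hab).2.2⟩
    · exact ⟨hR, Set.mem_insert_of_mem _ hu, Set.mem_insert _ _⟩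
  · rintro v hv hvr
    rcases Set.mem_insert_iff.mp hv with rfl | hvF
    · refine ⟨u, Or.inr ⟨rfl, rfl⟩, ?_⟩
      rintro p (hp | ⟨rfl, -⟩)
      · exact absurd (hsup p v hp).2.2 hw
      · rfl
    · obtain ⟨p, hp, hup⟩ := huniq v hvF hvr
      refine ⟨p, Or.inl hp, ?_⟩
      rintro q (hq | ⟨rfl, rfl⟩)
      · exact hup q hq
      · exact absurd hvF hw
  · rintro p (hp | ⟨rfl, h2⟩)
    · exact hnr p hp
    · exact hw (h2 ▸ hr)
  · intro v hv
    rcases Set.mem_insert_iff.mp hv with rfl | hvF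
    · exact .tail (Relation.ReflTransGen.mono (fun a b hab => Or.inl hab) _ _ (hreach u hu)) (Or.inr ⟨rfl, rfl⟩)
    · exact Relation.ReflTransGen.mono (fun a b hab => Or.inl hab) _ _ (hreach v hvF)

theorem POB.reachExtend {R : V → V → Prop} {r : V} {F : Set V} {T : V → V → Prop}
    (h : POB R r F T) {a b : V} (ha : a ∈ F) (hab : Relation.ReflTransGen R a b) :
    ∃ F' T', POB R r F' T' ∧ F ⊆ F' ∧ b ∈ F' := by
  induction hab with
  | refl => exact ⟨F, T, h, subset_rfl, ha⟩
  | @tail c d hac hcd ih =>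
    obtain ⟨F', T', h', hFF', hc⟩ := ih
    by_cases hd : d ∈ F'
    · exact ⟨F', T', h', hFF', hd⟩
    · exact ⟨insert d F', _, h'.addArc hcd hc hd, hFF'.trans (Set.subset_insert _ _),
        Set.mem_insert _ _⟩

theorem boundary_arc {A : V → V → Prop} {F : Set V} :
    ∀ {a b}, Relation.ReflTransGen A a b → a ∈ F → b ∉ F →
      ∃ u ∈ F, ∃ w, w ∉ F ∧ A u w := by
  intro a b h
  induction h with
  | refl => intro ha hb; exact absurd ha hb
  | @tail c d hac hcd ih =>
    intro ha hd
    by_cases hc : c ∈ F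
    · exact ⟨c, hc, d, hd, hcd⟩
    · exact ih ha hc

/-- Greedy extension of a partial outbranching to a spanning one, preserving
the number of leaves. -/
theorem POB.greedy [Fintype V] {A : V → V → Prop} {r : V} (hconn : RConnected A r) (k : ℕ) :
    ∀ (n : ℕ) (F : Set V) (T : V → V → Prop), (Set.univ \ F).ncard ≤ n → POB A r F T →
      k ≤ {v | v ∈ F ∧ ∀ u, ¬ T v u}.ncard →
      ∃ T', IsOutbranching A r T' ∧ k ≤ leafCount T' := by
  intro n
  induction n with
  | zero =>
    intro F T hn h hk
    have hF : F = Set.univ := by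
      by_contra hne
      obtain ⟨z, hz⟩ : ∃ z, z ∉ F := by
        by_contra hc; push_neg at hc; exact hne (Set.eq_univ_of_forall hc)
      have : z ∈ Set.univ \ F := ⟨trivial, hz⟩
      have hpos : 0 < (Set.univ \ F).ncard :=
        (Set.ncard_pos (Set.toFinite _)).mpr ⟨z, this⟩
      omega
    subst hF
    refine ⟨T, ⟨fun u v huv => (h.2.1 u v huv).1, fun v hv => h.2.2.1 v trivial hv,
      h.2.2.2.1, fun v => h.2.2.2.2 v trivial⟩, ?_⟩
    · have : {v | v ∈ (Set.univ : Set V) ∧ ∀ u, ¬ T v u} = {v | ∀ u, ¬ T v u} := by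
        ext v; simp
      rw [this] at hk
      exact hk
  | succ n ih =>
    intro F T hn h hk
    by_cases hF : F = Set.univ
    · exact ih F T (by rw [hF]; simp) h hk
    obtain ⟨z, hz⟩ : ∃ z, z ∉ F := by
      by_contra hc; push_neg at hc; exact hF (Set.eq_univ_of_forall hc)
    obtain ⟨u, hu, w, hw, huw⟩ := boundary_arc (hconn z) h.1 hz
    have h' := h.addArc huw hu hw
    have hcard : (Set.univ \ insert w F).ncard ≤ n := by
      have heq : Set.univ \ insert w F = (Set.univ \ F) \ {w} := by
        ext v
        simp only [Set.mem_diff, Set.mem_insert_iff, Set.mem_univ, true_and,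
          Set.mem_singleton_iff]
        tauto
      have h5 : ((Set.univ \ F) \ {w}).ncard + 1 = (Set.univ \ F).ncard :=
        Set.ncard_diff_singleton_add_one ⟨trivial, hw⟩ (Set.toFinite _)
      rw [heq]
      omega
    refine ih (insert w F) _ hcard h' ?_
    set X := {v | v ∈ F ∧ ∀ u, ¬ T v u} with hX
    have hsub : insert w (X \ {u}) ⊆
        {v | v ∈ insert w F ∧ ∀ q, ¬ (T v q ∨ (v = u ∧ q = w))} := by
      rintro v hv
      rcases Set.mem_insert_iff.mp hv with rfl | ⟨⟨hvF, hlf⟩, hvu⟩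
      · refine ⟨Set.mem_insert _ _, ?_⟩
        rintro q (hq | ⟨rfl, rfl⟩)
        · exact hw (h.2.1 _ _ hq).2.1
        · exact hw hu
      · refine ⟨Set.mem_insert_of_mem _ hvF, ?_⟩
        rintro q (hq | ⟨rfl, rfl⟩)
        · exact hlf q hq
        · exact hvu rfl
    have h1 : X.ncard ≤ (X \ {u}).ncard + 1 := by
      by_cases huX : u ∈ X
      · exact (Set.ncard_diff_singleton_add_one huX (Set.toFinite _)).ge
      · rw [Set.diff_singleton_eq_self huX]; omega
    have h2 : (insert w (X \ {u})).ncard = (X \ {u}).ncard + 1 := by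
      refine Set.ncard_insert_of_notMem ?_ (Set.toFinite _)
      rintro ⟨⟨hwF, -⟩, -⟩
      exact hw hwF
    have h3 := Set.ncard_le_ncard hsub (Set.toFinite _)
    omega

theorem avoid_to_B {A : V → V → Prop} {S : Set V} {y : V} :
    ∀ {a}, Relation.ReflTransGen (fun u v => A u v ∧ u ∉ S \ {y} ∧ v ∉ S \ {y}) a y →
      a = y ∨ (a ∉ S ∧ Relation.ReflTransGen (fun u v => A u v ∧ u ∉ S) a y) := by
  intro a h
  induction h using Relation.ReflTransGen.head_induction_on with
  | refl => exact Or.inl rfl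
  | head hac hcy ih =>
    rename_i a c
    by_cases hay : a = y
    · exact Or.inl hay
    have haS : a ∉ S := fun hs => hac.2.1 ⟨hs, hay⟩
    refine Or.inr ⟨haS, ?_⟩
    rcases ih with rfl | ⟨hcS, hpath⟩
    · exact Relation.ReflTransGen.single ⟨hac.1, haS⟩
    · exact Relation.ReflTransGen.head ⟨hac.1, haS⟩ hpath

theorem cover_inneighbours [Fintype V] {A : V → V → Prop} {r x : V}
    (hnocut : ∀ y, A y x → ReachesAvoiding A ({u | A u x} \ {y}) r y) :
    ∃ F T, POB (fun u v => A u v ∧ u ∉ {u | A u x}) r F T ∧ {u | A u x} ⊆ F := by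
  classical
  set S : Set V := {u | A u x} with hS
  have key : ∀ Y : Finset V, (↑Y : Set V) ⊆ S →
      ∃ F T, POB (fun u v => A u v ∧ u ∉ S) r F T ∧ (↑Y : Set V) ⊆ F := by
    intro Y
    induction Y using Finset.induction_on with
    | empty => intro _; exact ⟨{r}, _, POB_base, by simp⟩
    | @insert y Y hy ihY =>
      intro hYS
      obtain ⟨F, T, hPOB, hYF⟩ := ihY (by
        intro v hv; exact hYS (by simp [hv]))
      have hyS : y ∈ S := hYS (by simp)
      have hpath : Relation.ReflTransGen (fun u v => A u v ∧ u ∉ S) r y := by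
        rcases avoid_to_B (hnocut y hyS) with rfl | ⟨-, hp⟩
        · exact .refl
        · exact hp
      obtain ⟨F', T', h', hFF', hyF'⟩ := hPOB.reachExtend hPOB.1 hpath
      refine ⟨F', T', h', ?_⟩
      intro v hv
      rcases Finset.mem_insert.mp (by exact_mod_cast hv) with rfl | hvY
      · exact hyF'
      · exact hFF' (hYF hvY)
  obtain ⟨F, T, h1, h2⟩ := key (Set.toFinite S).toFinset (by simp [hS])
  exact ⟨F, T, h1, by simpa using h2⟩

/-- If `x` has indegree at least `k` and, for every
in-neighbour `y` of `x`, the set `N⁻(x) − y` does not cut `y` from `r`, then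
`D` has an outbranching with at least `k` leaves. -/
theorem large_indegree_many_leaves [Fintype V] (A : V → V → Prop) (r x : V)
    (k : ℕ)
    (hD : IsRootedDigraph A r) (hconn : RConnected A r)
    (hdeg : k ≤ indeg A x)
    (hnocut : ∀ y, A y x → ReachesAvoiding A ({u | A u x} \ {y}) r y) :
    ∃ T : V → V → Prop, IsOutbranching A r T ∧ k ≤ leafCount T := by
  classical
  rcases Nat.eq_zero_or_pos k with rfl | hk
  · exact POB.greedy hconn 0 _ {r} _ le_rfl POB_base (Nat.zero_le _)
  set S : Set V := {u | A u x} with hSdef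
  have hSk : k ≤ S.ncard := hdeg
  have hSne : S.Nonempty := by
    rw [← Set.ncard_pos (Set.toFinite _)]; omega
  obtain ⟨y₁, hy₁⟩ := hSne
  have hxr : x ≠ r := by
    rintro rfl
    exact hD.2.1 y₁ hy₁
  obtain ⟨F₁, T₁, hPOB₁, hSF₁⟩ := cover_inneighbours (r := r) hnocut
  have hxF : x ∉ F₁ := by
    intro hx
    obtain ⟨u, hu, -⟩ := hPOB₁.2.2.1 x hx hxr
    have := hPOB₁.2.1 u x hu
    exact this.1.2 this.1.1
  have hPOB₁A : POB A r F₁ T₁ := hPOB₁.mono (fun a b hab => hab.1)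
  have h₂ := hPOB₁A.addArc (hy₁ : A y₁ x) (hSF₁ hy₁) hxF
  have hleaf : k ≤ {v | v ∈ insert x F₁ ∧
      ∀ u, ¬ (T₁ v u ∨ (v = y₁ ∧ u = x))}.ncard := by
    have hsub : insert x (S \ {y₁}) ⊆ {v | v ∈ insert x F₁ ∧
        ∀ u, ¬ (T₁ v u ∨ (v = y₁ ∧ u = x))} := by
      rintro v hv
      rcases Set.mem_insert_iff.mp hv with rfl | ⟨hvS, hvy⟩
      · refine ⟨Set.mem_insert _ _, ?_⟩
        rintro u (hu | ⟨rfl, rfl⟩)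
        · exact hxF (hPOB₁.2.1 _ _ hu).2.1
        · exact hD.1 _ hy₁
      · refine ⟨Set.mem_insert_of_mem _ (hSF₁ hvS), ?_⟩
        rintro u (hu | ⟨rfl, rfl⟩)
        · exact (hPOB₁.2.1 _ _ hu).1.2 hvS
        · exact hvy rfl
    have hxS : x ∉ S \ {y₁} := fun h => hD.1 x h.1
    have h2 : (insert x (S \ {y₁})).ncard = (S \ {y₁}).ncard + 1 :=
      Set.ncard_insert_of_notMem hxS (Set.toFinite _)
    have h3 : (S \ {y₁}).ncard + 1 = S.ncard :=
      Set.ncard_diff_singleton_add_one hy₁ (Set.toFinite _)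
    have h4 := Set.ncard_le_ncard hsub (Set.toFinite _)
    omega
  exact POB.greedy hconn k (Set.univ \ insert x F₁).ncard _ _ le_rfl h₂ hleaf
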